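/- arXiv:1912.03873 — 2 statements merged into one kernel-verified Lean document; each statement's English description precedes it below -/
import Mathlib

section
/- Let d ≥ 1 be an integer, 1/2 < δ ≤ 1, and M ≥ d+1 a real number. Let (λ_m)_{m≥1} be an injective sequence in ℤ^d with |λ_m| ≤ √d · m^{1/d} for all m ≥ 1. Then there exists a constant C > 0 (depending only on d, δ, M) such that: (i) for every integer j ≥ 1 and every x ∈ ℝ^d with 2^{j−1} < |x| ≤ 2^j, one has ∑_{m=100}^∞ (1/(m (ln m)^δ)) (1+|x−λ_m|)^{−M} ≤ C · 2^{−jd} (1+j)^{−δ}; and (ii) for every x ∈ ℝ^d with |x| ≤ 1, one has ∑_{m=100}^∞ (1/(m (ln m)^δ)) (1+|x−λ_m|)^{−M} ≤ C. -/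
open Real

noncomputable section

/-- The embedding of an integer lattice point into `ℝ^d` with the Euclidean norm. -/
def toEuc {d : ℕ} (z : Fin d → ℤ) : EuclideanSpace ℝ (Fin d) :=
  (WithLp.equiv 2 (Fin d → ℝ)).symm fun i => (z i : ℝ)

lemma tsum_pi_prod : ∀ (n : ℕ) (g : Fin n → ℤ → ENNReal),
    ∑' z : Fin n → ℤ, ∏ i, g i (z i) = ∏ i, ∑' k : ℤ, g i k := by
  intro n
  induction n with
  | zero =>
    intro g
    have h1 : ∀ z : Fin 0 → ℤ, ∏ i, g i (z i) = 1 := fun z => by simp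
    simp only [h1]
    rw [tsum_eq_single (default : Fin 0 → ℤ) (fun b hb => absurd (Subsingleton.elim b default) hb)]
    simp
  | succ n ih =>
    intro g
    rw [← (Fin.consEquiv (fun _ : Fin (n+1) => ℤ)).tsum_eq (fun z => ∏ i, g i (z i))]
    have h1 : ∀ q : ℤ × (Fin n → ℤ),
        (∏ i, g i ((Fin.consEquiv (fun _ : Fin (n+1) => ℤ)) q i))
          = g 0 q.1 * ∏ i : Fin n, g i.succ (q.2 i) := by
      intro q
      rw [Fin.prod_univ_succ]
      simp [Fin.consEquiv]
    calc ∑' q : ℤ × (Fin n → ℤ), (fun z => ∏ i, g i (z i)) ((Fin.consEquiv _) q)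
        = ∑' q : ℤ × (Fin n → ℤ), g 0 q.1 * ∏ i : Fin n, g i.succ (q.2 i) := tsum_congr h1
      _ = ∑' (a : ℤ), ∑' (w : Fin n → ℤ), g 0 a * ∏ i : Fin n, g i.succ (w i) :=
          ENNReal.tsum_prod'
      _ = ∑' (a : ℤ), g 0 a * ∑' (w : Fin n → ℤ), ∏ i : Fin n, g i.succ (w i) := by
          simp only [ENNReal.tsum_mul_left]
      _ = (∑' (a : ℤ), g 0 a) * ∑' (w : Fin n → ℤ), ∏ i : Fin n, g i.succ (w i) :=
          ENNReal.tsum_mul_right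
      _ = ∏ i : Fin (n+1), ∑' k : ℤ, g i k := by
          rw [ih (fun i => g i.succ), Fin.prod_univ_succ]

lemma coord_abs_le {d : ℕ} (v : EuclideanSpace ℝ (Fin d)) (i : Fin d) : |v i| ≤ ‖v‖ := by
  rw [EuclideanSpace.norm_eq, ← Real.sqrt_sq_eq_abs]
  apply Real.sqrt_le_sqrt
  have := Finset.single_le_sum (f := fun j => ‖v j‖^2) (fun j _ => by positivity)
    (Finset.mem_univ i)
  simpa [Real.norm_eq_abs, sq_abs] using this

lemma prod_bound {d : ℕ} (hd : 1 ≤ d) {M : ℝ} (hM : 0 ≤ M) (v : EuclideanSpace ℝ (Fin d)) :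
    (1 + ‖v‖) ^ (-M) ≤ ∏ i, (1 + |v i|) ^ (-(M / d)) := by
  have hd0 : (0:ℝ) < d := by exact_mod_cast hd
  have h1 : ∀ i : Fin d, (0:ℝ) < 1 + |v i| := fun i => by positivity
  have hn : (0:ℝ) < 1 + ‖v‖ := by positivity
  have key : (1 + ‖v‖) ^ M = ((1 + ‖v‖) ^ (M/d)) ^ (d:ℕ) := by
    rw [← Real.rpow_natCast ((1+‖v‖)^(M/d)) d, ← Real.rpow_mul hn.le]
    congr 1
    field_simp
  have h2 : ∏ i, (1 + |v i|) ^ (M / d) ≤ (1 + ‖v‖) ^ M := by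
    rw [key]
    rw [show ((1 + ‖v‖) ^ (M/d)) ^ (d:ℕ) = ∏ _i : Fin d, (1 + ‖v‖) ^ (M/d) by
      rw [Finset.prod_const, Finset.card_univ, Fintype.card_fin]]
    apply Finset.prod_le_prod (fun i _ => by positivity)
    intro i _
    exact Real.rpow_le_rpow (h1 i).le (by linarith [coord_abs_le v i]) (by positivity)
  have hprodpos : (0:ℝ) < ∏ i, (1 + |v i|) ^ (M / d) :=
    Finset.prod_pos (fun i _ => Real.rpow_pos_of_pos (h1 i) _)
  rw [Real.rpow_neg hn.le]
  rw [show (∏ i, (1 + |v i|) ^ (-(M/d))) = (∏ i, (1 + |v i|) ^ (M/d))⁻¹ by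
    rw [← Finset.prod_inv_distrib]
    exact Finset.prod_congr rfl (fun i _ => Real.rpow_neg (h1 i).le _)]
  exact inv_anti₀ hprodpos h2

lemma summable_maxabs {p : ℝ} (hp : 1 < p) :
    Summable (fun k : ℤ => (max 1 |(k:ℝ)|) ^ (-p)) := by
  have hgsum : Summable (fun k : ℤ => |(k:ℝ)| ^ (-p) + if k = 0 then (1:ℝ) else 0) :=
    (Real.summable_abs_int_rpow hp).add
      (summable_of_ne_finset_zero (s := ({0} : Finset ℤ)) (fun k hk => by
        simp only [Finset.mem_singleton] at hk
        simp [hk]))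
  refine Summable.of_nonneg_of_le (fun k => by positivity) ?_ hgsum
  · intro k
    by_cases hk : k = 0
    · subst hk
      simp [Real.zero_rpow (by linarith : -p ≠ 0)]
    · have h1 : (1:ℝ) ≤ |(k:ℝ)| := by
        have : (1:ℤ) ≤ |k| := Int.one_le_abs (by exact_mod_cast hk)
        calc (1:ℝ) ≤ ((|k| : ℤ) : ℝ) := by exact_mod_cast this
          _ = |(k:ℝ)| := by push_cast; rfl
      rw [max_eq_right h1]
      simp [hk]

lemma line_bound {p : ℝ} (hp : 1 < p) (t : ℝ) :
    ∑' k : ℤ, ENNReal.ofReal ((1 + |t - k|) ^ (-p))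
      ≤ ENNReal.ofReal (∑' k : ℤ, (max 1 |(k:ℝ)|) ^ (-p)) := by
  rw [ENNReal.ofReal_tsum_of_nonneg (fun k => by positivity) (summable_maxabs hp)]
  rw [← (Equiv.addLeft (⌊t⌋ : ℤ)).tsum_eq (fun k : ℤ => ENNReal.ofReal ((1 + |t - k|) ^ (-p)))]
  apply ENNReal.tsum_le_tsum
  intro m
  apply ENNReal.ofReal_le_ofReal
  have hfl0 : (0:ℝ) ≤ t - ⌊t⌋ := by linarith [Int.floor_le t]
  have hfl1 : t - ⌊t⌋ < 1 := by linarith [Int.lt_floor_add_one t]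
  have habs : |(m:ℝ)| ≤ 1 + |t - ((⌊t⌋ : ℤ) + m : ℤ)| := by
    have e : t - (((⌊t⌋ : ℤ) + m : ℤ) : ℝ) = (t - ⌊t⌋) - m := by push_cast; ring
    have h2 : |(m:ℝ)| ≤ |t - ⌊t⌋| + |(t - ⌊t⌋) - m| := by
      calc |(m:ℝ)| = |(t - ⌊t⌋) - ((t - ⌊t⌋) - m)| := by ring_nf
        _ ≤ |t - ⌊t⌋| + |(t - ⌊t⌋) - m| := abs_sub _ _
    rw [e]
    rw [abs_of_nonneg hfl0] at h2
    linarith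
  apply Real.rpow_le_rpow_of_nonpos
    (lt_of_lt_of_le one_pos (le_max_left _ _))
  · simp only [Equiv.coe_addLeft]
    apply max_le
    · linarith [abs_nonneg (t - ((⌊t⌋ : ℤ) + m : ℤ) : ℝ)]
    · exact habs
  · linarith

lemma bridge {u : ℕ → ℝ} (hu : ∀ m, 0 ≤ u m) {c : ℝ} (hc : 0 ≤ c)
    (h : ∑' m, ENNReal.ofReal (u m) ≤ ENNReal.ofReal c) : ∑' m, u m ≤ c := by
  by_cases hs : Summable u
  · rw [← ENNReal.ofReal_tsum_of_nonneg hu hs] at h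
    exact (ENNReal.ofReal_le_ofReal_iff hc).mp h
  · rw [tsum_eq_zero_of_not_summable hs]; exact hc

lemma sq_le_nine_two_pow (j : ℕ) : ((1+j)^2 : ℕ) ≤ 9 * 2^j := by
  induction j with
  | zero => norm_num
  | succ n ih =>
    rcases Nat.lt_or_ge n 2 with h | h
    · interval_cases n <;> norm_num
    · have h1 : (1+(n+1))^2 ≤ 2*(1+n)^2 := by nlinarith
      calc (1+(n+1))^2 ≤ 2*(1+n)^2 := h1
        _ ≤ 2*(9*2^n) := by omega
        _ = 9*2^(n+1) := by ring

lemma sq_le_nine_two_rpow (j : ℕ) : (1+(j:ℝ))^2 ≤ 9 * (2:ℝ)^(j:ℝ) := by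
  have h2 : ((1+j : ℕ) : ℝ)^2 ≤ ((9 * 2^j : ℕ) : ℝ) := by exact_mod_cast sq_le_nine_two_pow j
  rw [Real.rpow_natCast]
  push_cast at h2 ⊢
  linarith

lemma log_nat_ge {m : ℕ} (hm : 100 ≤ m) : 1 ≤ Real.log m := by
  have h1 : Real.exp 1 ≤ (m:ℝ) := by
    have := Real.exp_one_lt_d9
    have h2 : (100:ℝ) ≤ m := by exact_mod_cast hm
    linarith
  calc (1:ℝ) = Real.log (Real.exp 1) := (Real.log_exp 1).symm
    _ ≤ Real.log m := Real.log_le_log (Real.exp_pos 1) h1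

lemma RA_ineq {d : ℕ} (hd : 1 ≤ d) {δ M : ℝ} (hδ1 : δ ≤ 1)
    (hM : (d:ℝ)+1 ≤ M) {j : ℕ} (hj : 1 ≤ j) :
    (1 + (j:ℝ)*d) * (2:ℝ)^(2*M - (j:ℝ)*M)
      ≤ (9 * (2:ℝ)^(2*M) * (1+(d:ℝ))) * ((2:ℝ)^(-((j:ℝ)*(d:ℝ))) * (1+(j:ℝ))^(-δ)) := by
  have hd0 : (0:ℝ) ≤ d := by positivity
  have hj0 : (0:ℝ) ≤ j := by positivity
  have hj1 : (1:ℝ) ≤ 1 + (j:ℝ) := by linarith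
  have h1 : (2:ℝ)^(2*M - (j:ℝ)*M) = (2:ℝ)^(2*M) * (2:ℝ)^(-((j:ℝ)*M)) := by
    rw [← Real.rpow_add two_pos]; ring_nf
  have h2 : (2:ℝ)^(-((j:ℝ)*M)) ≤ (2:ℝ)^(-((j:ℝ)*(d:ℝ)) + -(j:ℝ)) := by
    apply Real.rpow_le_rpow_of_exponent_le one_le_two
    nlinarith
  have h3 : (2:ℝ)^(-((j:ℝ)*(d:ℝ)) + -(j:ℝ)) =
      (2:ℝ)^(-((j:ℝ)*(d:ℝ))) * (2:ℝ)^(-(j:ℝ)) := Real.rpow_add two_pos _ _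
  have hkey : (1+(j:ℝ)) * (2:ℝ)^(-(j:ℝ)) ≤ 9 * (1+(j:ℝ))^(-δ) := by
    have e1 : (1+(j:ℝ)) = (1+(j:ℝ))^((1:ℝ)+δ) * (1+(j:ℝ))^(-δ) := by
      rw [← Real.rpow_add (by linarith : (0:ℝ) < 1 + j)]
      norm_num
    have e2 : (1+(j:ℝ))^((1:ℝ)+δ) ≤ (1+(j:ℝ))^(2:ℝ) :=
      Real.rpow_le_rpow_of_exponent_le hj1 (by linarith)
    have e3 : (1+(j:ℝ))^(2:ℝ) = (1+(j:ℝ))^(2:ℕ) := by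
      rw [← Real.rpow_natCast (1+(j:ℝ)) 2]; norm_num
    have e4 : (1+(j:ℝ))^((1:ℝ)+δ) ≤ 9 * (2:ℝ)^(j:ℝ) := by
      rw [e3] at e2
      calc (1+(j:ℝ))^((1:ℝ)+δ) ≤ (1+(j:ℝ))^(2:ℕ) := e2
        _ ≤ 9 * (2:ℝ)^(j:ℝ) := sq_le_nine_two_rpow j
    have e5 : (2:ℝ)^(j:ℝ) * (2:ℝ)^(-(j:ℝ)) = 1 := by
      rw [← Real.rpow_add two_pos]; norm_num
    have h6 : (0:ℝ) ≤ (1+(j:ℝ))^(-δ) := by positivity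
    have h7 : (0:ℝ) ≤ (2:ℝ)^(-(j:ℝ)) := by positivity
    calc (1+(j:ℝ)) * (2:ℝ)^(-(j:ℝ))
        = (1+(j:ℝ))^((1:ℝ)+δ) * (1+(j:ℝ))^(-δ) * (2:ℝ)^(-(j:ℝ)) := by rw [← e1]
      _ ≤ (9 * (2:ℝ)^(j:ℝ)) * (1+(j:ℝ))^(-δ) * (2:ℝ)^(-(j:ℝ)) := by
          apply mul_le_mul_of_nonneg_right (mul_le_mul_of_nonneg_right e4 h6) h7
      _ = 9 * (1+(j:ℝ))^(-δ) * ((2:ℝ)^(j:ℝ) * (2:ℝ)^(-(j:ℝ))) := by ring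
      _ = 9 * (1+(j:ℝ))^(-δ) := by rw [e5]; ring
  have h8 : (1 + (j:ℝ)*d) ≤ (1+(d:ℝ)) * (1+(j:ℝ)) := by nlinarith
  have h10 : (0:ℝ) ≤ (2:ℝ)^(2*M) := by positivity
  calc (1 + (j:ℝ)*d) * (2:ℝ)^(2*M - (j:ℝ)*M)
      = (2:ℝ)^(2*M) * ((1 + (j:ℝ)*d) * (2:ℝ)^(-((j:ℝ)*M))) := by rw [h1]; ring
    _ ≤ (2:ℝ)^(2*M) * ((1 + (j:ℝ)*d) * ((2:ℝ)^(-((j:ℝ)*(d:ℝ))) * (2:ℝ)^(-(j:ℝ)))) := by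
        apply mul_le_mul_of_nonneg_left _ h10
        rw [← h3]
        exact mul_le_mul_of_nonneg_left h2 (by positivity)
    _ ≤ (2:ℝ)^(2*M) * (((1+(d:ℝ)) * (1+(j:ℝ))) * ((2:ℝ)^(-((j:ℝ)*(d:ℝ))) * (2:ℝ)^(-(j:ℝ)))) := by
        apply mul_le_mul_of_nonneg_left _ h10
        apply mul_le_mul_of_nonneg_right h8 (by positivity)
    _ = (2:ℝ)^(2*M) * (1+(d:ℝ)) * (2:ℝ)^(-((j:ℝ)*(d:ℝ))) * ((1+(j:ℝ)) * (2:ℝ)^(-(j:ℝ))) := by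
        ring
    _ ≤ (2:ℝ)^(2*M) * (1+(d:ℝ)) * (2:ℝ)^(-((j:ℝ)*(d:ℝ))) * (9 * (1+(j:ℝ))^(-δ)) := by
        apply mul_le_mul_of_nonneg_left hkey
        positivity
    _ = (9 * (2:ℝ)^(2*M) * (1+(d:ℝ))) * ((2:ℝ)^(-((j:ℝ)*(d:ℝ))) * (1+(j:ℝ))^(-δ)) := by ring

lemma RB_coef {d : ℕ} (hd : 1 ≤ d) {δ : ℝ} (hδ0 : 0 < δ) (hδ1 : δ ≤ 1) {j m : ℕ}
    (hj : 3*d+10 ≤ j) (hm100 : 100 ≤ m) (hm : (2:ℝ)^(((j:ℝ)-d-2)*d) ≤ (m:ℝ)) :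
    1 / ((m:ℝ) * Real.log m ^ δ)
      ≤ ((2:ℝ)^(((d:ℝ)+2)*(d:ℝ)) * (4 / Real.log 2))
          * ((2:ℝ)^(-((j:ℝ)*(d:ℝ))) * (1+(j:ℝ))^(-δ)) := by
  have hd1 : (1:ℝ) ≤ d := by exact_mod_cast hd
  have hj3 : 3*(d:ℝ)+10 ≤ j := by exact_mod_cast hj
  set Y : ℝ := ((j:ℝ)-d-2)*d with hY
  have hjd2 : (0:ℝ) ≤ (j:ℝ)-d-2 := by linarith
  have hYd : (1+(j:ℝ))/4 ≤ Y := by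
    have h1 : (1+(j:ℝ))/4 ≤ (j:ℝ)-d-2 := by linarith
    calc (1+(j:ℝ))/4 ≤ (j:ℝ)-d-2 := h1
      _ = ((j:ℝ)-d-2)*1 := by ring
      _ ≤ ((j:ℝ)-d-2)*d := mul_le_mul_of_nonneg_left hd1 hjd2
  have h2Y : (0:ℝ) < (2:ℝ)^Y := Real.rpow_pos_of_pos two_pos Y
  have hlog2 : (0:ℝ) < Real.log 2 := Real.log_pos one_lt_two
  have hlog2' : Real.log 2 / 4 ≤ 1 := by
    have := Real.log_two_lt_d9; linarith
  have hlogm : (1+(j:ℝ))/4 * Real.log 2 ≤ Real.log m := by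
    calc (1+(j:ℝ))/4 * Real.log 2 ≤ Y * Real.log 2 :=
          mul_le_mul_of_nonneg_right hYd hlog2.le
      _ = Real.log ((2:ℝ)^Y) := (Real.log_rpow two_pos Y).symm
      _ ≤ Real.log m := Real.log_le_log h2Y hm
  have hbase : (0:ℝ) < (1+(j:ℝ))/4 * Real.log 2 := by
    apply mul_pos (by positivity) hlog2
  have hLlow : (1+(j:ℝ))^δ * (Real.log 2/4) ≤ Real.log m ^ δ := by
    have s1 : (Real.log 2/4) ≤ (Real.log 2/4)^δ := by
      have := Real.rpow_le_rpow_of_exponent_ge (by positivity) hlog2' hδ1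
      rwa [Real.rpow_one] at this
    calc (1+(j:ℝ))^δ * (Real.log 2/4)
        ≤ (1+(j:ℝ))^δ * (Real.log 2/4)^δ :=
          mul_le_mul_of_nonneg_left s1 (by positivity)
      _ = ((1+(j:ℝ)) * (Real.log 2/4))^δ :=
          (Real.mul_rpow (by positivity) (by positivity)).symm
      _ = ((1+(j:ℝ))/4 * Real.log 2)^δ := by ring_nf
      _ ≤ Real.log m ^ δ := Real.rpow_le_rpow hbase.le hlogm hδ0.le
  have h1m : 1/(m:ℝ) ≤ (2:ℝ)^(-Y) := by
    rw [Real.rpow_neg two_pos.le, ← one_div]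
    exact one_div_le_one_div_of_le h2Y hm
  have h1L : 1/(Real.log m ^ δ) ≤ (4/Real.log 2) * (1+(j:ℝ))^(-δ) := by
    have s2 : 1/(Real.log m ^ δ) ≤ 1/((1+(j:ℝ))^δ * (Real.log 2/4)) :=
      one_div_le_one_div_of_le (by positivity) hLlow
    calc 1/(Real.log m ^ δ) ≤ 1/((1+(j:ℝ))^δ * (Real.log 2/4)) := s2
      _ = (4/Real.log 2) * ((1+(j:ℝ))^δ)⁻¹ := by field_simp
      _ = (4/Real.log 2) * (1+(j:ℝ))^(-δ) := by
          rw [Real.rpow_neg (by positivity)]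
  have hfin : 1 / ((m:ℝ) * Real.log m ^ δ) = (1/(m:ℝ)) * (1/(Real.log m ^ δ)) := by
    field_simp
  have h2split : (2:ℝ)^(-Y) = (2:ℝ)^(((d:ℝ)+2)*(d:ℝ)) * (2:ℝ)^(-((j:ℝ)*(d:ℝ))) := by
    rw [← Real.rpow_add two_pos]
    congr 1
    rw [hY]; ring
  calc 1 / ((m:ℝ) * Real.log m ^ δ)
      = (1/(m:ℝ)) * (1/(Real.log m ^ δ)) := hfin
    _ ≤ (2:ℝ)^(-Y) * ((4/Real.log 2) * (1+(j:ℝ))^(-δ)) := by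
        apply mul_le_mul h1m h1L (by positivity) (by positivity)
    _ = ((2:ℝ)^(((d:ℝ)+2)*(d:ℝ)) * (4 / Real.log 2))
          * ((2:ℝ)^(-((j:ℝ)*(d:ℝ))) * (1+(j:ℝ))^(-δ)) := by
        rw [h2split]; ring

lemma smallj_ineq {d j : ℕ} (hd : 1 ≤ d) (hj : 1 ≤ j) {δ : ℝ} (hδ1 : δ ≤ 1)
    (hjs : (j:ℝ) ≤ 3*(d:ℝ)+9) {A₀ : ℝ} (hA : 0 ≤ A₀) :
    A₀ ≤ ((A₀+1) * ((2:ℝ)^((3*(d:ℝ)+10)*d) * (3*(d:ℝ)+11)))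
          * ((2:ℝ)^(-((j:ℝ)*(d:ℝ))) * (1+(j:ℝ))^(-δ)) := by
  have hd1 : (1:ℝ) ≤ d := by exact_mod_cast hd
  have hj1 : (1:ℝ) ≤ j := by exact_mod_cast hj
  have t1 : (2:ℝ)^(-((3*(d:ℝ)+10)*d)) ≤ (2:ℝ)^(-((j:ℝ)*(d:ℝ))) := by
    apply Real.rpow_le_rpow_of_exponent_le one_le_two
    nlinarith
  have t2 : ((3*(d:ℝ)+11))⁻¹ ≤ (1+(j:ℝ))^(-δ) := by
    have s1 : (1+(j:ℝ))^(-(1:ℝ)) ≤ (1+(j:ℝ))^(-δ) :=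
      Real.rpow_le_rpow_of_exponent_le (by linarith) (by linarith)
    have s2 : (1+(j:ℝ))^(-(1:ℝ)) = (1+(j:ℝ))⁻¹ := by
      rw [Real.rpow_neg_one]
    have s3 : ((3*(d:ℝ)+11))⁻¹ ≤ (1+(j:ℝ))⁻¹ := by
      apply inv_anti₀ (by linarith) (by linarith)
    rw [s2] at s1
    linarith
  have key : (A₀+1) * ((2:ℝ)^((3*(d:ℝ)+10)*d) * (3*(d:ℝ)+11))
      * ((2:ℝ)^(-((3*(d:ℝ)+10)*d)) * ((3*(d:ℝ)+11))⁻¹) = A₀+1 := by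
    have e1 : (2:ℝ)^((3*(d:ℝ)+10)*d) * (2:ℝ)^(-((3*(d:ℝ)+10)*d)) = 1 := by
      rw [← Real.rpow_add two_pos]; norm_num
    have e2 : (3*(d:ℝ)+11) * ((3*(d:ℝ)+11))⁻¹ = 1 := by
      apply mul_inv_cancel₀; positivity
    calc (A₀+1) * ((2:ℝ)^((3*(d:ℝ)+10)*d) * (3*(d:ℝ)+11))
        * ((2:ℝ)^(-((3*(d:ℝ)+10)*d)) * ((3*(d:ℝ)+11))⁻¹)
        = (A₀+1) * (((2:ℝ)^((3*(d:ℝ)+10)*d) * (2:ℝ)^(-((3*(d:ℝ)+10)*d)))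
            * ((3*(d:ℝ)+11) * ((3*(d:ℝ)+11))⁻¹)) := by ring
      _ = A₀+1 := by rw [e1, e2]; ring
  calc A₀ ≤ A₀ + 1 := by linarith
    _ = (A₀+1) * ((2:ℝ)^((3*(d:ℝ)+10)*d) * (3*(d:ℝ)+11))
          * ((2:ℝ)^(-((3*(d:ℝ)+10)*d)) * ((3*(d:ℝ)+11))⁻¹) := key.symm
    _ ≤ ((A₀+1) * ((2:ℝ)^((3*(d:ℝ)+10)*d) * (3*(d:ℝ)+11)))
          * ((2:ℝ)^(-((j:ℝ)*(d:ℝ))) * (1+(j:ℝ))^(-δ)) := by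
        apply mul_le_mul_of_nonneg_left _ (by positivity)
        apply mul_le_mul t1 t2 (by positivity) (by positivity)

set_option maxHeartbeats 1000000 in
/-- Pointwise bounds on `∑_{m≥100} (1/(m (ln m)^δ)) (1+|x−λ_m|)^{−M}` on dyadic shells:
on `2^{j−1} < |x| ≤ 2^j` it is `≲ 2^{−jd}(1+j)^{−δ}`, and on `|x| ≤ 1` it is bounded. -/
theorem stmt3 (d : ℕ) (hd : 1 ≤ d) (δ M : ℝ) (hδ : 1 / 2 < δ) (hδ1 : δ ≤ 1)
    (hM : (d : ℝ) + 1 ≤ M) (lam : ℕ → Fin d → ℤ)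
    (hinj : ∀ m m', 1 ≤ m → 1 ≤ m' → lam m = lam m' → m = m')
    (hbd : ∀ m, 1 ≤ m → ‖toEuc (lam m)‖ ≤ Real.sqrt d * (m : ℝ) ^ ((1 : ℝ) / d)) :
    ∃ C : ℝ, 0 < C ∧
      ((∀ j : ℕ, 1 ≤ j → ∀ x : EuclideanSpace ℝ (Fin d),
        (2 : ℝ) ^ (j - 1) < ‖x‖ → ‖x‖ ≤ (2 : ℝ) ^ j →
        (∑' m : ℕ, if 100 ≤ m then
            1 / ((m : ℝ) * Real.log m ^ δ) * (1 + ‖x - toEuc (lam m)‖) ^ (-M) else 0) ≤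
          C * ((2 : ℝ) ^ (j * d))⁻¹ * (1 + (j : ℝ)) ^ (-δ)) ∧
      (∀ x : EuclideanSpace ℝ (Fin d), ‖x‖ ≤ 1 →
        (∑' m : ℕ, if 100 ≤ m then
            1 / ((m : ℝ) * Real.log m ^ δ) * (1 + ‖x - toEuc (lam m)‖) ^ (-M) else 0) ≤ C)) := by
  classical
  have hd0 : (0:ℝ) < d := by exact_mod_cast hd
  have hd1 : (1:ℝ) ≤ d := by exact_mod_cast hd
  have hδ0 : (0:ℝ) < δ := by linarith
  have hM0 : (0:ℝ) ≤ M := by nlinarith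
  have hlog2 : (0:ℝ) < Real.log 2 := Real.log_pos one_lt_two
  set p : ℝ := M / d with hp_def
  have hp : 1 < p := by
    rw [hp_def, lt_div_iff₀ hd0]
    nlinarith
  set B₁ : ℝ := ∑' k : ℤ, (max 1 |(k:ℝ)|) ^ (-p) with hB1_def
  have hB1 : 0 ≤ B₁ := tsum_nonneg (fun k => by positivity)
  set A₀ : ℝ := B₁ ^ d with hA0_def
  have hA0 : 0 ≤ A₀ := by positivity
  have hcoord : ∀ (x : EuclideanSpace ℝ (Fin d)) (z : Fin d → ℤ) (i : Fin d),
      (x - toEuc z) i = x i - (z i : ℝ) := by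
    intro x z i
    rw [PiLp.sub_apply]
    simp [toEuc, WithLp.equiv_symm_apply]
  -- lattice bound
  have lat : ∀ x : EuclideanSpace ℝ (Fin d),
      ∑' z : Fin d → ℤ, ENNReal.ofReal ((1 + ‖x - toEuc z‖) ^ (-M)) ≤ ENNReal.ofReal A₀ := by
    intro x
    have step1 : ∀ z : Fin d → ℤ, ENNReal.ofReal ((1 + ‖x - toEuc z‖) ^ (-M))
        ≤ ∏ i, ENNReal.ofReal ((1 + |x i - (z i : ℝ)|) ^ (-p)) := by
      intro z
      have hpb := prod_bound hd hM0 (x - toEuc z)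
      calc ENNReal.ofReal ((1 + ‖x - toEuc z‖) ^ (-M))
          ≤ ENNReal.ofReal (∏ i, (1 + |(x - toEuc z) i|) ^ (-(M/(d:ℝ)))) :=
            ENNReal.ofReal_le_ofReal hpb
        _ = ∏ i, ENNReal.ofReal ((1 + |(x - toEuc z) i|) ^ (-(M/(d:ℝ)))) :=
            ENNReal.ofReal_prod_of_nonneg (fun i _ => by positivity)
        _ = ∏ i, ENNReal.ofReal ((1 + |x i - (z i:ℝ)|) ^ (-p)) :=
            Finset.prod_congr rfl (fun i _ => by rw [hcoord x z i, hp_def])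
    calc ∑' z : Fin d → ℤ, ENNReal.ofReal ((1 + ‖x - toEuc z‖) ^ (-M))
        ≤ ∑' z : Fin d → ℤ, ∏ i, ENNReal.ofReal ((1 + |x i - (z i : ℝ)|) ^ (-p)) :=
          ENNReal.tsum_le_tsum step1
      _ = ∏ i, ∑' k : ℤ, ENNReal.ofReal ((1 + |x i - (k : ℝ)|) ^ (-p)) :=
          tsum_pi_prod d (fun i k => ENNReal.ofReal ((1 + |x i - (k : ℝ)|) ^ (-p)))
      _ ≤ ∏ _i : Fin d, ENNReal.ofReal B₁ :=
          Finset.prod_le_prod' (fun i _ => line_bound hp (x i))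
      _ = ENNReal.ofReal B₁ ^ d := by rw [Finset.prod_const, Finset.card_univ, Fintype.card_fin]
      _ = ENNReal.ofReal A₀ := by rw [hA0_def, ENNReal.ofReal_pow hB1]
  -- injection step
  have inj_step : ∀ x : EuclideanSpace ℝ (Fin d),
      (∑' m : ℕ, if 100 ≤ m then ENNReal.ofReal ((1 + ‖x - toEuc (lam m)‖) ^ (-M)) else 0)
        ≤ ENNReal.ofReal A₀ := by
    intro x
    have hindic : (fun m : ℕ => if 100 ≤ m then
        ENNReal.ofReal ((1 + ‖x - toEuc (lam m)‖) ^ (-M)) else 0)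
        = Set.indicator {m : ℕ | 100 ≤ m}
            (fun m => ENNReal.ofReal ((1 + ‖x - toEuc (lam m)‖) ^ (-M))) := by
      funext m
      rw [Set.indicator_apply]
      simp [Set.mem_setOf_eq]
    rw [hindic, ← tsum_subtype]
    have hinj' : Function.Injective (fun s : {m : ℕ | 100 ≤ m} => lam s) := by
      rintro ⟨a, ha⟩ ⟨b, hb⟩ h
      exact Subtype.ext (hinj a b (le_trans (by norm_num) ha) (le_trans (by norm_num) hb) h)
    exact le_trans
      (ENNReal.tsum_comp_le_tsum_of_injective hinj'
        (fun z => ENNReal.ofReal ((1 + ‖x - toEuc z‖) ^ (-M))))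
      (lat x)
  -- coefficient bounds
  have coef_le_inv : ∀ m : ℕ, 100 ≤ m →
      1 / ((m:ℝ) * Real.log m ^ δ) ≤ 1 / (m:ℝ) := by
    intro m hm
    have hm0 : (0:ℝ) < m := by
      have : (100:ℝ) ≤ m := by exact_mod_cast hm
      linarith
    have hL : 1 ≤ Real.log m ^ δ := by
      calc (1:ℝ) = 1 ^ δ := (Real.one_rpow δ).symm
        _ ≤ Real.log m ^ δ := Real.rpow_le_rpow (by norm_num) (log_nat_ge hm) hδ0.le
    apply one_div_le_one_div_of_le hm0
    nlinarith
  have coef_le_one : ∀ m : ℕ, 100 ≤ m → 1 / ((m:ℝ) * Real.log m ^ δ) ≤ 1 := by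
    intro m hm
    have hm1 : (1:ℝ) ≤ m := by
      have : (100:ℝ) ≤ m := by exact_mod_cast hm
      linarith
    calc 1 / ((m:ℝ) * Real.log m ^ δ) ≤ 1/(m:ℝ) := coef_le_inv m hm
      _ ≤ 1 := by rw [div_le_one (by linarith)]; linarith
  set T : EuclideanSpace ℝ (Fin d) → ℕ → ENNReal := fun x m =>
    if 100 ≤ m then ENNReal.ofReal
      (1 / ((m : ℝ) * Real.log m ^ δ) * (1 + ‖x - toEuc (lam m)‖) ^ (-M)) else 0
    with hT_def
  have hT : ∀ x : EuclideanSpace ℝ (Fin d), (∑' m : ℕ, ENNReal.ofReal (if 100 ≤ m then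
      1 / ((m : ℝ) * Real.log m ^ δ) * (1 + ‖x - toEuc (lam m)‖) ^ (-M) else 0))
        = ∑' m, T x m := by
    intro x
    apply tsum_congr; intro m
    simp only [hT_def]
    split_ifs with h <;> simp
  have unif : ∀ x : EuclideanSpace ℝ (Fin d), ∑' m, T x m ≤ ENNReal.ofReal A₀ := by
    intro x
    refine le_trans (ENNReal.tsum_le_tsum (fun m => ?_)) (inj_step x)
    simp only [hT_def]
    split_ifs with h
    · apply ENNReal.ofReal_le_ofReal
      calc 1 / ((m : ℝ) * Real.log m ^ δ) * (1 + ‖x - toEuc (lam m)‖) ^ (-M)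
          ≤ 1 * (1 + ‖x - toEuc (lam m)‖) ^ (-M) :=
            mul_le_mul_of_nonneg_right (coef_le_one m h) (by positivity)
        _ = _ := one_mul _
    · exact le_rfl
  set C : ℝ := (A₀ + 1) * ((2:ℝ)^((3*(d:ℝ)+10)*d) * (3*(d:ℝ)+11)
      + 9 * (2:ℝ)^(2*M) * (1+(d:ℝ))
      + (2:ℝ)^(((d:ℝ)+2)*(d:ℝ)) * (4 / Real.log 2) + 1) with hC_def
  have b1 : (0:ℝ) < (2:ℝ)^((3*(d:ℝ)+10)*d) * (3*(d:ℝ)+11) := by positivity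
  have b2 : (0:ℝ) ≤ 9 * (2:ℝ)^(2*M) * (1+(d:ℝ)) := by positivity
  have b3 : (0:ℝ) ≤ (2:ℝ)^(((d:ℝ)+2)*(d:ℝ)) * (4 / Real.log 2) :=
    mul_nonneg (by positivity) (div_nonneg (by norm_num) hlog2.le)
  have hCfac : (0:ℝ) < (2:ℝ)^((3*(d:ℝ)+10)*d) * (3*(d:ℝ)+11)
      + 9 * (2:ℝ)^(2*M) * (1+(d:ℝ))
      + (2:ℝ)^(((d:ℝ)+2)*(d:ℝ)) * (4 / Real.log 2) + 1 := by linarith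
  have hC : 0 < C := by
    rw [hC_def]
    exact mul_pos (by linarith) hCfac
  have hA0C : A₀ ≤ C := by
    rw [hC_def]
    nlinarith
  refine ⟨C, hC, ?_, ?_⟩
  · -- part (i)
    intro j hj x hx1 hx2
    have hj1 : (1:ℝ) ≤ j := by exact_mod_cast hj
    have hRHSeq : C * ((2 : ℝ) ^ (j * d))⁻¹ * (1 + (j : ℝ)) ^ (-δ)
        = C * ((2:ℝ)^(-((j:ℝ)*(d:ℝ))) * (1+(j:ℝ))^(-δ)) := by
      rw [← Real.rpow_natCast 2 (j*d), ← Real.rpow_neg (by norm_num)]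
      push_cast
      ring
    rw [hRHSeq]
    have ht0 : (0:ℝ) ≤ (2:ℝ)^(-((j:ℝ)*(d:ℝ))) * (1+(j:ℝ))^(-δ) := by positivity
    have hRHS0 : 0 ≤ C * ((2:ℝ)^(-((j:ℝ)*(d:ℝ))) * (1+(j:ℝ))^(-δ)) := by positivity
    apply bridge (fun m => by split_ifs with h; exacts [by positivity, le_rfl]) hRHS0
    rw [hT x]
    by_cases hcase : (j:ℝ) ≤ 3*(d:ℝ)+9
    · -- small j
      refine le_trans (unif x) (ENNReal.ofReal_le_ofReal ?_)
      have hsm := smallj_ineq hd hj hδ1 hcase hA0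
      have hX1le : (A₀+1) * ((2:ℝ)^((3*(d:ℝ)+10)*d) * (3*(d:ℝ)+11)) ≤ C := by
        rw [hC_def]
        nlinarith
      calc A₀ ≤ ((A₀+1) * ((2:ℝ)^((3*(d:ℝ)+10)*d) * (3*(d:ℝ)+11)))
            * ((2:ℝ)^(-((j:ℝ)*(d:ℝ))) * (1+(j:ℝ))^(-δ)) := hsm
        _ ≤ C * ((2:ℝ)^(-((j:ℝ)*(d:ℝ))) * (1+(j:ℝ))^(-δ)) :=
            mul_le_mul_of_nonneg_right hX1le ht0
    · -- large j
      push_neg at hcase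
      have hjbig : 3*d + 10 ≤ j := by
        have h9 : ((3*d + 9 : ℕ) : ℝ) < j := by push_cast; linarith
        have : 3*d + 9 < j := by exact_mod_cast h9
        omega
      have hjd2 : d + 2 ≤ j := by omega
      set K : ℕ := 2^((j - (d+2))*d) with hK_def
      have hKcast : (K:ℝ) = (2:ℝ) ^ (((j:ℝ) - d - 2)*d) := by
        rw [hK_def]
        push_cast
        rw [← Real.rpow_natCast 2 ((j - (d+2))*d)]
        congr 1
        rw [Nat.cast_mul, Nat.cast_sub hjd2]
        push_cast
        ring
      -- split
      have hsplit : ∑' m, T x m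
          = (∑' m, if m ≤ K then T x m else 0) + ∑' m, if K < m then T x m else 0 := by
        rw [← ENNReal.tsum_add]
        apply tsum_congr
        intro m
        by_cases h2 : m ≤ K
        · simp [h2, not_lt.mpr h2]
        · simp [h2, not_le.mp h2]
      -- case A
      have hA_bound : (∑' m, if m ≤ K then T x m else 0)
          ≤ ENNReal.ofReal ((1 + (j:ℝ)*d) * (2:ℝ)^(2*M - (j:ℝ)*M)) := by
        have hpt : ∀ m : ℕ, (if m ≤ K then T x m else 0)
            ≤ (if m ≤ K then ENNReal.ofReal (1/(m:ℝ)) else 0)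
                * ENNReal.ofReal ((2:ℝ)^(2*M - (j:ℝ)*M)) := by
          intro m
          by_cases h2 : m ≤ K
          · rw [if_pos h2, if_pos h2]
            simp only [hT_def]
            split_ifs with h1
            · rw [← ENNReal.ofReal_mul (by positivity)]
              apply ENNReal.ofReal_le_ofReal
              -- geometric estimate
              have h1m : 1 ≤ m := le_trans (by norm_num) h1
              have hlam := hbd m h1m
              have hmK : (m:ℝ) ≤ (2:ℝ)^(((j:ℝ)-d-2)*d) := by
                rw [← hKcast]; exact_mod_cast h2
              have hm1d : (m:ℝ) ^ ((1:ℝ)/d) ≤ (2:ℝ) ^ ((j:ℝ) - d - 2) := by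
                calc (m:ℝ)^((1:ℝ)/d) ≤ ((2:ℝ)^(((j:ℝ)-d-2)*d))^((1:ℝ)/d) :=
                      Real.rpow_le_rpow (by positivity) hmK (by positivity)
                  _ = (2:ℝ)^((((j:ℝ)-d-2)*d) * ((1:ℝ)/d)) := by
                      rw [← Real.rpow_mul (by norm_num : (0:ℝ) ≤ 2)]
                  _ = (2:ℝ)^((j:ℝ)-d-2) := by
                      congr 1; field_simp
              have hsq : Real.sqrt d ≤ (2:ℝ)^((d:ℝ)) := by
                have h5 : (d:ℝ) ≤ (4:ℝ)^(d:ℕ) := by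
                  exact_mod_cast (Nat.lt_pow_self (n := d) (by norm_num : 1 < 4)).le
                have e : ((2:ℝ)^((d:ℝ)))^2 = (4:ℝ)^(d:ℕ) := by
                  rw [Real.rpow_natCast, ← pow_mul, mul_comm, pow_mul]
                  norm_num
                calc Real.sqrt d ≤ Real.sqrt (((2:ℝ)^((d:ℝ)))^2) := by
                      apply Real.sqrt_le_sqrt; rw [e]; exact h5
                  _ = (2:ℝ)^((d:ℝ)) := Real.sqrt_sq (by positivity)
              have hnormlam : ‖toEuc (lam m)‖ ≤ (2:ℝ)^((j:ℝ)-2) := by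
                calc ‖toEuc (lam m)‖ ≤ Real.sqrt d * (m:ℝ)^((1:ℝ)/d) := hlam
                  _ ≤ (2:ℝ)^((d:ℝ)) * (2:ℝ)^((j:ℝ)-d-2) :=
                      mul_le_mul hsq hm1d (by positivity) (by positivity)
                  _ = (2:ℝ)^((j:ℝ)-2) := by
                      rw [← Real.rpow_add two_pos]; congr 1; ring
              have hxlow : (2:ℝ)^((j:ℝ)-1) < ‖x‖ := by
                have e : ((2:ℝ)^(j-1 : ℕ)) = (2:ℝ)^((j:ℝ)-1) := by
                  rw [← Real.rpow_natCast 2 (j-1)]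
                  congr 1
                  rw [Nat.cast_sub hj]; norm_num
                rw [← e]; exact hx1
              have hdist0 : (2:ℝ)^((j:ℝ)-2) ≤ 1 + ‖x - toEuc (lam m)‖ := by
                have h5 : ‖x‖ - ‖toEuc (lam m)‖ ≤ ‖x - toEuc (lam m)‖ :=
                  norm_sub_norm_le x (toEuc (lam m))
                have h6 : (2:ℝ)^((j:ℝ)-1) = 2 * (2:ℝ)^((j:ℝ)-2) := by
                  rw [show (j:ℝ)-1 = 1 + ((j:ℝ)-2) by ring, Real.rpow_add two_pos,
                    Real.rpow_one]
                linarith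
              have hdist : (1 + ‖x - toEuc (lam m)‖) ^ (-M) ≤ (2:ℝ)^(2*M - (j:ℝ)*M) := by
                calc (1 + ‖x - toEuc (lam m)‖) ^ (-M)
                    ≤ ((2:ℝ)^((j:ℝ)-2)) ^ (-M) :=
                      Real.rpow_le_rpow_of_nonpos (by positivity) hdist0
                        (by linarith : -M ≤ 0)
                  _ = (2:ℝ)^(((j:ℝ)-2) * (-M)) := by
                      rw [← Real.rpow_mul (by norm_num : (0:ℝ) ≤ 2)]
                  _ = (2:ℝ)^(2*M - (j:ℝ)*M) := by congr 1; ring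
              exact mul_le_mul (coef_le_inv m h1) hdist (by positivity) (by positivity)
            · exact zero_le
          · rw [if_neg h2, if_neg h2]
            simp
        calc (∑' m, if m ≤ K then T x m else 0)
            ≤ ∑' m, (if m ≤ K then ENNReal.ofReal (1/(m:ℝ)) else 0)
                * ENNReal.ofReal ((2:ℝ)^(2*M - (j:ℝ)*M)) := ENNReal.tsum_le_tsum hpt
          _ = (∑' m, (if m ≤ K then ENNReal.ofReal (1/(m:ℝ)) else 0))
                * ENNReal.ofReal ((2:ℝ)^(2*M - (j:ℝ)*M)) := ENNReal.tsum_mul_right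
          _ ≤ ENNReal.ofReal (1 + (j:ℝ)*d) * ENNReal.ofReal ((2:ℝ)^(2*M - (j:ℝ)*M)) := by
              apply mul_le_mul_left
              -- harmonic bound
              have hsupp : ∀ m ∉ Finset.range (K+1),
                  (if m ≤ K then ENNReal.ofReal (1/(m:ℝ)) else 0) = 0 := by
                intro m hm
                rw [if_neg]
                simp only [Finset.mem_range] at hm
                omega
              rw [tsum_eq_sum hsupp]
              have e1 : ∑ m ∈ Finset.range (K+1), (if m ≤ K then ENNReal.ofReal (1/(m:ℝ)) else 0)
                  = ∑ m ∈ Finset.range (K+1), ENNReal.ofReal (1/(m:ℝ)) := by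
                apply Finset.sum_congr rfl
                intro m hm
                rw [if_pos]
                simp only [Finset.mem_range] at hm
                omega
              rw [e1, ← ENNReal.ofReal_sum_of_nonneg (fun m _ => by positivity)]
              apply ENNReal.ofReal_le_ofReal
              have e2 : ∑ m ∈ Finset.range (K+1), 1/(m:ℝ) = (harmonic K : ℝ) := by
                rw [Finset.sum_range_succ' (fun m => 1/(m:ℝ)) K]
                simp only [Nat.cast_zero, div_zero, add_zero]
                rw [harmonic]
                push_cast
                apply Finset.sum_congr rfl
                intro i _
                rw [one_div]
              have e3 : (harmonic K : ℝ) ≤ 1 + Real.log K := harmonic_le_one_add_log K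
              have e4 : Real.log K ≤ (j:ℝ)*d := by
                rw [hKcast, Real.log_rpow two_pos]
                have hY0 : (0:ℝ) ≤ ((j:ℝ)-d-2)*d := by
                  apply mul_nonneg _ hd0.le
                  have : 3*(d:ℝ)+10 ≤ j := by exact_mod_cast hjbig
                  linarith
                have hY1 : ((j:ℝ)-d-2)*d ≤ (j:ℝ)*d := by nlinarith
                nlinarith [Real.log_two_lt_d9]
              linarith
          _ = ENNReal.ofReal ((1 + (j:ℝ)*d) * (2:ℝ)^(2*M - (j:ℝ)*M)) :=
              (ENNReal.ofReal_mul (by positivity)).symm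
      -- case B
      have hB_bound : (∑' m, if K < m then T x m else 0)
          ≤ ENNReal.ofReal ((((2:ℝ)^(((d:ℝ)+2)*(d:ℝ)) * (4 / Real.log 2))
              * ((2:ℝ)^(-((j:ℝ)*(d:ℝ))) * (1+(j:ℝ))^(-δ))) * A₀) := by
        set c2 : ℝ := ((2:ℝ)^(((d:ℝ)+2)*(d:ℝ)) * (4 / Real.log 2))
            * ((2:ℝ)^(-((j:ℝ)*(d:ℝ))) * (1+(j:ℝ))^(-δ)) with hc2_def
        have hc20 : 0 ≤ c2 := by
          rw [hc2_def]
          exact mul_nonneg b3 ht0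
        have hpt : ∀ m : ℕ, (if K < m then T x m else 0)
            ≤ ENNReal.ofReal c2
                * (if 100 ≤ m then ENNReal.ofReal ((1 + ‖x - toEuc (lam m)‖) ^ (-M)) else 0) := by
          intro m
          by_cases h2 : K < m
          · rw [if_pos h2]
            simp only [hT_def]
            split_ifs with h1
            · rw [← ENNReal.ofReal_mul hc20]
              apply ENNReal.ofReal_le_ofReal
              have hmge : (2:ℝ)^(((j:ℝ)-d-2)*d) ≤ (m:ℝ) := by
                rw [← hKcast]
                exact_mod_cast h2.le
              have hcoef : 1 / ((m:ℝ) * Real.log m ^ δ) ≤ c2 := by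
                rw [hc2_def]
                exact RB_coef hd hδ0 hδ1 hjbig h1 hmge
              exact mul_le_mul_of_nonneg_right hcoef (by positivity)
            · exact zero_le
          · rw [if_neg h2]
            exact zero_le
        calc (∑' m, if K < m then T x m else 0)
            ≤ ∑' m, ENNReal.ofReal c2
                * (if 100 ≤ m then ENNReal.ofReal ((1 + ‖x - toEuc (lam m)‖) ^ (-M)) else 0) :=
              ENNReal.tsum_le_tsum hpt
          _ = ENNReal.ofReal c2
                * ∑' m, (if 100 ≤ m then ENNReal.ofReal ((1 + ‖x - toEuc (lam m)‖) ^ (-M)) else 0) :=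
              ENNReal.tsum_mul_left
          _ ≤ ENNReal.ofReal c2 * ENNReal.ofReal A₀ := mul_le_mul_right (inj_step x) _
          _ = ENNReal.ofReal (c2 * A₀) := (ENNReal.ofReal_mul hc20).symm
      -- combine
      have hfinal : (1 + (j:ℝ)*d) * (2:ℝ)^(2*M - (j:ℝ)*M)
          + (((2:ℝ)^(((d:ℝ)+2)*(d:ℝ)) * (4 / Real.log 2))
              * ((2:ℝ)^(-((j:ℝ)*(d:ℝ))) * (1+(j:ℝ))^(-δ))) * A₀
          ≤ C * ((2:ℝ)^(-((j:ℝ)*(d:ℝ))) * (1+(j:ℝ))^(-δ)) := by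
        have hRA := RA_ineq hd hδ1 hM hj
        have hCge : 9 * (2:ℝ)^(2*M) * (1+(d:ℝ))
            + (2:ℝ)^(((d:ℝ)+2)*(d:ℝ)) * (4 / Real.log 2) * A₀ ≤ C := by
          rw [hC_def]
          nlinarith
        calc (1 + (j:ℝ)*d) * (2:ℝ)^(2*M - (j:ℝ)*M)
            + (((2:ℝ)^(((d:ℝ)+2)*(d:ℝ)) * (4 / Real.log 2))
                * ((2:ℝ)^(-((j:ℝ)*(d:ℝ))) * (1+(j:ℝ))^(-δ))) * A₀
            ≤ (9 * (2:ℝ)^(2*M) * (1+(d:ℝ))) * ((2:ℝ)^(-((j:ℝ)*(d:ℝ))) * (1+(j:ℝ))^(-δ))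
              + (((2:ℝ)^(((d:ℝ)+2)*(d:ℝ)) * (4 / Real.log 2))
                * ((2:ℝ)^(-((j:ℝ)*(d:ℝ))) * (1+(j:ℝ))^(-δ))) * A₀ := by linarith
          _ = (9 * (2:ℝ)^(2*M) * (1+(d:ℝ))
                + (2:ℝ)^(((d:ℝ)+2)*(d:ℝ)) * (4 / Real.log 2) * A₀)
              * ((2:ℝ)^(-((j:ℝ)*(d:ℝ))) * (1+(j:ℝ))^(-δ)) := by ring
          _ ≤ C * ((2:ℝ)^(-((j:ℝ)*(d:ℝ))) * (1+(j:ℝ))^(-δ)) :=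
              mul_le_mul_of_nonneg_right hCge ht0
      calc ∑' m, T x m
          = (∑' m, if m ≤ K then T x m else 0) + ∑' m, if K < m then T x m else 0 := hsplit
        _ ≤ ENNReal.ofReal ((1 + (j:ℝ)*d) * (2:ℝ)^(2*M - (j:ℝ)*M))
            + ENNReal.ofReal ((((2:ℝ)^(((d:ℝ)+2)*(d:ℝ)) * (4 / Real.log 2))
                * ((2:ℝ)^(-((j:ℝ)*(d:ℝ))) * (1+(j:ℝ))^(-δ))) * A₀) :=
            add_le_add hA_bound hB_bound
        _ = ENNReal.ofReal ((1 + (j:ℝ)*d) * (2:ℝ)^(2*M - (j:ℝ)*M)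
            + (((2:ℝ)^(((d:ℝ)+2)*(d:ℝ)) * (4 / Real.log 2))
                * ((2:ℝ)^(-((j:ℝ)*(d:ℝ))) * (1+(j:ℝ))^(-δ))) * A₀) := by
            rw [← ENNReal.ofReal_add (by positivity) (mul_nonneg (mul_nonneg b3 ht0) hA0)]
        _ ≤ ENNReal.ofReal (C * ((2:ℝ)^(-((j:ℝ)*(d:ℝ))) * (1+(j:ℝ))^(-δ))) :=
            ENNReal.ofReal_le_ofReal hfinal
  · -- part (ii)
    intro x hx
    apply bridge (fun m => by split_ifs with h; exacts [by positivity, le_rfl]) hC.le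
    rw [hT x]
    exact le_trans (unif x) (ENNReal.ofReal_le_ofReal hA0C)
end
end

section
/- Let d ≥ 1 and m ≥ 2 be integers, let s_1, …, s_m ≥ 0, and set s := s_1+⋯+s_m. Then there is a constant C > 0 (depending only on d, m, s_1,…,s_m) such that for all measurable F, G : ℝ^d → [0,∞), ∫_{(ℝ^d)^m} ( ∏_{j=1}^m (1+4π²|x_j|²)^{s_j} ) F(x_1+⋯+x_m)² ∏_{j=2}^m G(x_1−x_j)² dx_1⋯dx_m ≤ C ( ∫_{ℝ^d} (1+4π²|y|²)^{s} F(y)² dy ) ∏_{j=2}^m ( ∫_{ℝ^d} (1+4π²|y|²)^{s} G(y)² dy ). -/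
open Real MeasureTheory
open scoped ENNReal

noncomputable section

set_option maxHeartbeats 1000000

private lemma one_add_sum_le_prod_one_add' {ι : Type*} (s : Finset ι) (b : ι → ℝ)
    (hb : ∀ i ∈ s, 0 ≤ b i) : 1 + ∑ i ∈ s, b i ≤ ∏ i ∈ s, (1 + b i) := by
  induction s using Finset.cons_induction with
  | empty => simp
  | cons a t ha ih =>
    rw [Finset.sum_cons, Finset.prod_cons]
    have h1 : 0 ≤ b a := hb a (Finset.mem_cons_self a t)
    have h2 : ∀ i ∈ t, 0 ≤ b i := fun i hi => hb i (Finset.mem_cons_of_mem hi)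
    have h3 := ih h2
    have h4 : 0 ≤ ∑ i ∈ t, b i := Finset.sum_nonneg h2
    nlinarith

private lemma lintegral_fin_prod {E : Type*} [MeasureSpace E] [SigmaFinite (volume : Measure E)] :
    ∀ (n : ℕ) (f : Fin (n+1) → E → ℝ≥0∞), (∀ i, Measurable (f i)) →
      ∫⁻ x : Fin (n+1) → E, ∏ i, f i (x i) = ∏ i, ∫⁻ y, f i y := by
  intro n
  induction n with
  | zero =>
    intro f hf
    simp only [Fin.prod_univ_succ, Fin.prod_univ_zero, mul_one]
    have h := (volume_preserving_funUnique (Fin 1) E).lintegral_comp (hf 0)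
    have he : ∀ x : Fin 1 → E, (MeasurableEquiv.funUnique (Fin 1) E) x = x 0 := fun x => rfl
    simp only [he] at h
    exact h
  | succ n ih =>
    intro f hf
    have h := (volume_preserving_piFinSuccAbove (fun _ : Fin (n+2) => E) 0)
    set e := MeasurableEquiv.piFinSuccAbove (fun _ : Fin (n+2) => E) 0 with he
    set g : E × (Fin (n+1) → E) → ℝ≥0∞ := fun p => f 0 p.1 * ∏ i : Fin (n+1), f i.succ (p.2 i)
      with hg
    have hgm : Measurable g := by
      apply Measurable.mul
      · exact (hf 0).comp measurable_fst
      · exact Finset.measurable_prod _ fun i _ =>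
          (hf i.succ).comp ((measurable_pi_apply i).comp measurable_snd)
    have hx : ∀ x : Fin (n+2) → E, (∏ i, f i (x i)) = g (e x) := by
      intro x
      rw [Fin.prod_univ_succ]
      congr 1
    calc ∫⁻ x : Fin (n+2) → E, ∏ i, f i (x i) = ∫⁻ x, g (e x) := by simp_rw [hx]
      _ = ∫⁻ p, g p := h.lintegral_comp hgm
      _ = (∫⁻ a, f 0 a) * ∫⁻ b : Fin (n+1) → E, ∏ i, f i.succ (b i) := by
          rw [MeasureTheory.Measure.volume_eq_prod]
          exact lintegral_prod_mul (hf 0).aemeasurable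
            (Finset.measurable_prod _ fun (i : Fin (n+1)) _ =>
              (hf i.succ).comp (measurable_pi_apply i)).aemeasurable
      _ = ∏ i, ∫⁻ y, f i y := by
          rw [ih (fun i => f i.succ) (fun i => hf i.succ)]
          exact (Fin.prod_univ_succ (fun (i : Fin (n+2)) => ∫⁻ y, f i y)).symm

variable {d m : ℕ}

private def projL (d m : ℕ) (j : Fin m) :
    (Fin m → EuclideanSpace ℝ (Fin d)) →ₗ[ℝ] EuclideanSpace ℝ (Fin d) :=
  LinearMap.proj j

@[simp] private lemma projL_apply (d m : ℕ) (j : Fin m)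
    (x : Fin m → EuclideanSpace ℝ (Fin d)) : projL d m j x = x j := rfl

private def fwdL (d m : ℕ) (i0 : Fin m) :
    (Fin m → EuclideanSpace ℝ (Fin d)) →ₗ[ℝ] (Fin m → EuclideanSpace ℝ (Fin d)) :=
  LinearMap.pi fun l => if l = i0 then ∑ j, projL d m j
    else projL d m i0 - projL d m l

private def bwdL (d m : ℕ) (i0 : Fin m) :
    (Fin m → EuclideanSpace ℝ (Fin d)) →ₗ[ℝ] (Fin m → EuclideanSpace ℝ (Fin d)) :=
  LinearMap.pi fun l => (m : ℝ)⁻¹ • (∑ j, projL d m j) -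
    (if l = i0 then 0 else projL d m l)

private lemma fwdL_apply_self (i0 : Fin m) (x : Fin m → EuclideanSpace ℝ (Fin d)) :
    fwdL d m i0 x i0 = ∑ j, x j := by
  simp [fwdL, LinearMap.pi_apply]

private lemma fwdL_apply_ne {l : Fin m} (i0 : Fin m) (hl : l ≠ i0)
    (x : Fin m → EuclideanSpace ℝ (Fin d)) :
    fwdL d m i0 x l = x i0 - x l := by
  simp [fwdL, LinearMap.pi_apply, hl]

private lemma bwdL_apply_self (i0 : Fin m) (y : Fin m → EuclideanSpace ℝ (Fin d)) :
    bwdL d m i0 y i0 = (m : ℝ)⁻¹ • ∑ j, y j := by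
  simp [bwdL, LinearMap.pi_apply]

private lemma bwdL_apply_ne {l : Fin m} (i0 : Fin m) (hl : l ≠ i0)
    (y : Fin m → EuclideanSpace ℝ (Fin d)) :
    bwdL d m i0 y l = (m : ℝ)⁻¹ • (∑ j, y j) - y l := by
  simp [bwdL, LinearMap.pi_apply, hl]

private lemma sum_fwdL (i0 : Fin m) (x : Fin m → EuclideanSpace ℝ (Fin d)) :
    ∑ j, fwdL d m i0 x j = (m : ℝ) • x i0 := by
  have h0 : 0 < m := i0.pos
  rw [← Finset.add_sum_erase _ _ (Finset.mem_univ i0), fwdL_apply_self,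
    Finset.sum_congr rfl (fun j hj => fwdL_apply_ne i0 (Finset.ne_of_mem_erase hj) x),
    Finset.sum_sub_distrib, Finset.sum_const, Finset.sum_erase_eq_sub (Finset.mem_univ i0),
    Finset.card_erase_of_mem (Finset.mem_univ i0), Finset.card_univ, Fintype.card_fin]
  have hm : (m - 1) • x i0 + x i0 = m • x i0 := by
    rw [← succ_nsmul, Nat.sub_add_cancel h0]
  rw [← Nat.cast_smul_eq_nsmul ℝ m (x i0)] at hm
  rw [← hm]
  abel

private lemma sum_bwdL (i0 : Fin m) (y : Fin m → EuclideanSpace ℝ (Fin d)) :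
    ∑ j, bwdL d m i0 y j = y i0 := by
  have h0 : 0 < m := i0.pos
  have hm0 : (m : ℝ) ≠ 0 := Nat.cast_ne_zero.2 h0.ne'
  rw [← Finset.add_sum_erase _ _ (Finset.mem_univ i0), bwdL_apply_self,
    Finset.sum_congr rfl (fun j hj => bwdL_apply_ne i0 (Finset.ne_of_mem_erase hj) y),
    Finset.sum_sub_distrib, Finset.sum_const, Finset.sum_erase_eq_sub (Finset.mem_univ i0),
    Finset.card_erase_of_mem (Finset.mem_univ i0), Finset.card_univ, Fintype.card_fin]
  have hm : (m : ℝ)⁻¹ • (∑ j, y j) + (m - 1) • ((m : ℝ)⁻¹ • ∑ j, y j) = ∑ j, y j := by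
    rw [← succ_nsmul', Nat.sub_add_cancel h0, ← Nat.cast_smul_eq_nsmul ℝ m, smul_smul,
      mul_inv_cancel₀ hm0, one_smul]
  have goal' : (m : ℝ)⁻¹ • (∑ j, y j) +
      ((m - 1) • ((m : ℝ)⁻¹ • ∑ j, y j) - ((∑ j, y j) - y i0)) =
      ((m : ℝ)⁻¹ • (∑ j, y j) + (m - 1) • ((m : ℝ)⁻¹ • ∑ j, y j)) - (∑ j, y j) + y i0 := by
    abel
  rw [goal', hm, sub_self, zero_add]

private def TEq (d m : ℕ) (i0 : Fin m) :
    (Fin m → EuclideanSpace ℝ (Fin d)) ≃ₗ[ℝ] (Fin m → EuclideanSpace ℝ (Fin d)) :=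
  LinearEquiv.ofLinear (fwdL d m i0) (bwdL d m i0)
    (by
      apply LinearMap.ext; intro y; funext l
      have h0 : 0 < m := i0.pos
      have hm0 : (m : ℝ) ≠ 0 := Nat.cast_ne_zero.2 h0.ne'
      simp only [LinearMap.comp_apply, LinearMap.id_apply]
      by_cases hl : l = i0
      · rw [hl, fwdL_apply_self, sum_bwdL]
      · rw [fwdL_apply_ne i0 hl, bwdL_apply_self, bwdL_apply_ne i0 hl]
        abel)
    (by
      apply LinearMap.ext; intro x; funext l
      have h0 : 0 < m := i0.pos
      have hm0 : (m : ℝ) ≠ 0 := Nat.cast_ne_zero.2 h0.ne'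
      simp only [LinearMap.comp_apply, LinearMap.id_apply]
      by_cases hl : l = i0
      · rw [hl, bwdL_apply_self, sum_fwdL, inv_smul_smul₀ hm0]
      · rw [bwdL_apply_ne i0 hl, sum_fwdL, inv_smul_smul₀ hm0, fwdL_apply_ne i0 hl,
          sub_sub_cancel])

private lemma det_fwdL_ne_zero (d m : ℕ) (i0 : Fin m) : LinearMap.det (fwdL d m i0) ≠ 0 :=
  (LinearEquiv.isUnit_det' (TEq d m i0)).ne_zero

private lemma bwdL_fwdL (i0 : Fin m) (x : Fin m → EuclideanSpace ℝ (Fin d)) :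
    bwdL d m i0 (fwdL d m i0 x) = x :=
  (TEq d m i0).symm_apply_apply x

private lemma weight_le (i0 : Fin m) (x : Fin m → EuclideanSpace ℝ (Fin d)) (j : Fin m) :
    1 + 4 * π ^ 2 * ‖x j‖ ^ 2 ≤
      4 * (m : ℝ) * ∏ l, (1 + 4 * π ^ 2 * ‖fwdL d m i0 x l‖ ^ 2) := by
  set y := fwdL d m i0 x with hy
  have h0 : 0 < m := i0.pos
  have hm1 : (1 : ℝ) ≤ (m : ℝ) := by exact_mod_cast h0
  have hxj : x j = bwdL d m i0 y j := by rw [hy, bwdL_fwdL]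
  set a := ∑ l, ‖y l‖ with ha
  have ha0 : 0 ≤ a := Finset.sum_nonneg fun l _ => norm_nonneg _
  have hS : ‖∑ l, y l‖ ≤ a := norm_sum_le _ _
  have hyj : ‖y j‖ ≤ a := Finset.single_le_sum (fun l _ => norm_nonneg _) (Finset.mem_univ j)
  have hminv : ‖(m : ℝ)⁻¹ • ∑ l, y l‖ ≤ a := by
    rw [norm_smul, norm_inv, Real.norm_natCast]
    have h1 : ((m : ℝ))⁻¹ ≤ 1 := by
      rw [inv_le_one_iff₀]; right; exact hm1
    nlinarith [norm_nonneg (∑ l, y l)]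
  have h1 : ‖x j‖ ≤ 2 * a := by
    rw [hxj]
    by_cases hj : j = i0
    · rw [hj, bwdL_apply_self]
      nlinarith
    · rw [bwdL_apply_ne i0 hj]
      calc ‖(m : ℝ)⁻¹ • (∑ l, y l) - y j‖ ≤ ‖(m : ℝ)⁻¹ • ∑ l, y l‖ + ‖y j‖ := norm_sub_le _ _
        _ ≤ 2 * a := by nlinarith
  set Ssq := ∑ l, ‖y l‖ ^ 2 with hSsq
  have hSsq0 : 0 ≤ Ssq := Finset.sum_nonneg fun l _ => sq_nonneg _
  have h3 : a ^ 2 ≤ (m : ℝ) * Ssq := by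
    have := sq_sum_le_card_mul_sum_sq (s := (Finset.univ : Finset (Fin m)))
      (f := fun l => ‖y l‖)
    simpa [Finset.card_univ] using this
  have h2 : ‖x j‖ ^ 2 ≤ 4 * ((m : ℝ) * Ssq) := by nlinarith [norm_nonneg (x j)]
  have hprod := one_add_sum_le_prod_one_add' Finset.univ
    (fun l => 4 * π ^ 2 * ‖y l‖ ^ 2) (fun l _ => by positivity)
  set B := ∑ l, 4 * π ^ 2 * ‖y l‖ ^ 2 with hB
  have hBS : B = 4 * π ^ 2 * Ssq := by rw [hB, hSsq, Finset.mul_sum]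
  have hB0 : 0 ≤ B := by rw [hBS]; positivity
  set P := ∏ l, (1 + 4 * π ^ 2 * ‖y l‖ ^ 2) with hP
  calc 1 + 4 * π ^ 2 * ‖x j‖ ^ 2 ≤ 1 + 4 * π ^ 2 * (4 * ((m : ℝ) * Ssq)) := by
        nlinarith [sq_nonneg π]
    _ = 1 + 4 * (m : ℝ) * B := by rw [hBS]; ring
    _ ≤ 4 * (m : ℝ) * (1 + B) := by nlinarith
    _ ≤ 4 * (m : ℝ) * P := by
        have h4 : (0 : ℝ) ≤ 4 * (m : ℝ) := by positivity
        have h5 : 1 + B ≤ P := hprod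
        nlinarith

private lemma weight_prod_le (i0 : Fin m) (s : Fin m → ℝ) (hs : ∀ j, 0 ≤ s j)
    (x : Fin m → EuclideanSpace ℝ (Fin d)) :
    ∏ j, (1 + 4 * π ^ 2 * ‖x j‖ ^ 2) ^ s j ≤
      (4 * (m : ℝ)) ^ (∑ j, s j) *
        ∏ l, (1 + 4 * π ^ 2 * ‖fwdL d m i0 x l‖ ^ 2) ^ (∑ j, s j) := by
  have h0 : 0 < m := i0.pos
  set y := fwdL d m i0 x with hy
  have hw : ∀ z : EuclideanSpace ℝ (Fin d), (0:ℝ) < 1 + 4 * π ^ 2 * ‖z‖ ^ 2 := fun z => by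
    positivity
  have hPpos : (0:ℝ) < ∏ l, (1 + 4 * π ^ 2 * ‖y l‖ ^ 2) :=
    Finset.prod_pos fun l _ => hw _
  have hKP : (0:ℝ) < 4 * (m : ℝ) * ∏ l, (1 + 4 * π ^ 2 * ‖y l‖ ^ 2) := by positivity
  calc ∏ j, (1 + 4 * π ^ 2 * ‖x j‖ ^ 2) ^ s j
      ≤ ∏ j, (4 * (m : ℝ) * ∏ l, (1 + 4 * π ^ 2 * ‖y l‖ ^ 2)) ^ s j := by
        apply Finset.prod_le_prod (fun j _ => Real.rpow_nonneg (hw _).le _)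
        exact fun j _ => Real.rpow_le_rpow (hw _).le (weight_le i0 x j) (hs j)
    _ = (4 * (m : ℝ) * ∏ l, (1 + 4 * π ^ 2 * ‖y l‖ ^ 2)) ^ (∑ j, s j) :=
        (Real.rpow_sum_of_pos hKP s Finset.univ).symm
    _ = (4 * (m : ℝ)) ^ (∑ j, s j) *
        (∏ l, (1 + 4 * π ^ 2 * ‖y l‖ ^ 2)) ^ (∑ j, s j) := by
        rw [Real.mul_rpow (by positivity) hPpos.le]
    _ = (4 * (m : ℝ)) ^ (∑ j, s j) *
        ∏ l, (1 + 4 * π ^ 2 * ‖y l‖ ^ 2) ^ (∑ j, s j) := by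
        rw [Real.finset_prod_rpow _ _ (fun l _ => (hw _).le)]


/-- The change-of-variables inequality of Case 2: for `s = s_1+⋯+s_m`,
`∫_{(ℝ^d)^m} (∏_j (1+4π²|x_j|²)^{s_j}) F(x_1+⋯+x_m)² ∏_{j=2}^m G(x_1−x_j)² dx`
is dominated by `C (∫ (1+4π²|y|²)^s F(y)² dy) ∏_{j=2}^m (∫ (1+4π²|y|²)^s G(y)² dy)`. -/
theorem stmt10 (d m : ℕ) (hd : 1 ≤ d) (hm : 2 ≤ m) (s : Fin m → ℝ) (hs : ∀ j, 0 ≤ s j) :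
    ∃ C : ℝ, 0 < C ∧ ∀ F G : EuclideanSpace ℝ (Fin d) → ℝ,
      Measurable F → Measurable G → (∀ y, 0 ≤ F y) → (∀ y, 0 ≤ G y) →
      (∫⁻ x : Fin m → EuclideanSpace ℝ (Fin d),
          ENNReal.ofReal ((∏ j, (1 + 4 * π ^ 2 * ‖x j‖ ^ 2) ^ s j) *
            F (∑ j, x j) ^ 2 *
            ∏ j ∈ Finset.univ.filter fun j : Fin m => (j : ℕ) ≠ 0,
              G (x ⟨0, by omega⟩ - x j) ^ 2)) ≤
        ENNReal.ofReal C *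
          (∫⁻ y : EuclideanSpace ℝ (Fin d),
            ENNReal.ofReal ((1 + 4 * π ^ 2 * ‖y‖ ^ 2) ^ (∑ j, s j) * F y ^ 2)) *
          ∏ j ∈ Finset.univ.filter fun j : Fin m => (j : ℕ) ≠ 0,
            (∫⁻ y : EuclideanSpace ℝ (Fin d),
              ENNReal.ofReal ((1 + 4 * π ^ 2 * ‖y‖ ^ 2) ^ (∑ j, s j) * G y ^ 2)) := by
  obtain ⟨n, rfl⟩ : ∃ n, m = n + 1 := ⟨m - 1, by omega⟩
  set E := EuclideanSpace ℝ (Fin d)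
  set X := Fin (n + 1) → E with hX
  set i0 : Fin (n + 1) := 0 with hi0
  set S := ∑ j, s j with hSdef
  have hS0 : 0 ≤ S := Finset.sum_nonneg fun j _ => hs j
  set D := |(LinearMap.det (fwdL d (n+1) i0))⁻¹| with hD
  have hDpos : 0 < D := by
    rw [hD]
    exact abs_pos.2 (inv_ne_zero (det_fwdL_ne_zero d (n+1) i0))
  set K : ℝ := (4 * ((n : ℝ) + 1)) ^ S with hK
  have hKpos : 0 < K := by rw [hK]; positivity
  refine ⟨K * D, by positivity, ?_⟩
  intro F G hFm hGm hFnn hGnn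
  -- basic setup
  haveI : (volume : Measure X).IsAddHaarMeasure := { }
  have hw : ∀ z : E, (0:ℝ) < 1 + 4 * π ^ 2 * ‖z‖ ^ 2 := fun z => by positivity
  have hwcont : Continuous fun z : E => ((1 + 4 * π ^ 2 * ‖z‖ ^ 2) ^ S : ℝ) := by
    apply Continuous.rpow_const
    · continuity
    · exact fun z => Or.inl (hw z).ne'
  set hF : E → ℝ≥0∞ := fun z => ENNReal.ofReal ((1 + 4 * π ^ 2 * ‖z‖ ^ 2) ^ S * F z ^ 2)
    with hhF
  set hG : E → ℝ≥0∞ := fun z => ENNReal.ofReal ((1 + 4 * π ^ 2 * ‖z‖ ^ 2) ^ S * G z ^ 2)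
    with hhG
  have hFmeas : Measurable hF :=
    (hwcont.measurable.mul (hFm.pow_const 2)).ennreal_ofReal
  have hGmeas : Measurable hG :=
    (hwcont.measurable.mul (hGm.pow_const 2)).ennreal_ofReal
  set hfun : Fin (n+1) → E → ℝ≥0∞ := fun l => if l = i0 then hF else hG with hhfun
  have hfunmeas : ∀ l, Measurable (hfun l) := by
    intro l
    rw [hhfun]
    by_cases hl : l = i0 <;> simp [hl, hFmeas, hGmeas]
  set Φ : X → ℝ≥0∞ := fun y => ∏ l, hfun l (y l) with hΦdef
  have hΦmeas : Measurable Φ :=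
    Finset.measurable_prod _ fun l _ => (hfunmeas l).comp (measurable_pi_apply l)
  have hTmeas : Measurable fun x : X => fwdL d (n+1) i0 x :=
    (LinearMap.continuous_of_finiteDimensional _).measurable
  have hFil : (Finset.univ.filter fun j : Fin (n+1) => (j : ℕ) ≠ 0) =
      Finset.univ.erase i0 := by
    ext j
    rw [hi0]
    simp only [Finset.mem_filter, Finset.mem_univ, true_and, Finset.mem_erase, and_true, ne_eq]
    rw [Fin.ext_iff, Fin.val_zero]
  -- pointwise bound
  have claim : ∀ x : X,
      ENNReal.ofReal ((∏ j, (1 + 4 * π ^ 2 * ‖x j‖ ^ 2) ^ s j) * F (∑ j, x j) ^ 2 *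
        ∏ j ∈ Finset.univ.filter fun j : Fin (n+1) => (j : ℕ) ≠ 0,
          G (x i0 - x j) ^ 2) ≤
      ENNReal.ofReal K * Φ (fwdL d (n+1) i0 x) := by
    intro x
    set y := fwdL d (n+1) i0 x with hy
    have hyi0 : y i0 = ∑ j, x j := fwdL_apply_self i0 x
    have hGprod : (∏ j ∈ Finset.univ.filter fun j : Fin (n+1) => (j : ℕ) ≠ 0,
        G (x i0 - x j) ^ 2) = ∏ j ∈ Finset.univ.erase i0, G (y j) ^ 2 := by
      rw [hFil]
      exact Finset.prod_congr rfl fun j hj => by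
        rw [hy, fwdL_apply_ne i0 (Finset.ne_of_mem_erase hj)]
    have hreal : (∏ j, (1 + 4 * π ^ 2 * ‖x j‖ ^ 2) ^ s j) * F (∑ j, x j) ^ 2 *
        (∏ j ∈ Finset.univ.filter fun j : Fin (n+1) => (j : ℕ) ≠ 0, G (x i0 - x j) ^ 2) ≤
        K * ∏ l, ((1 + 4 * π ^ 2 * ‖y l‖ ^ 2) ^ S *
          (if l = i0 then F (y l) else G (y l)) ^ 2) := by
      rw [hGprod, ← hyi0]
      have hsplit : ∏ l, ((1 + 4 * π ^ 2 * ‖y l‖ ^ 2) ^ S *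
          (if l = i0 then F (y l) else G (y l)) ^ 2) =
          (∏ l, (1 + 4 * π ^ 2 * ‖y l‖ ^ 2) ^ S) *
            (F (y i0) ^ 2 * ∏ l ∈ Finset.univ.erase i0, G (y l) ^ 2) := by
        rw [Finset.prod_mul_distrib]
        congr 1
        rw [← Finset.mul_prod_erase Finset.univ _ (Finset.mem_univ i0), if_pos rfl]
        congr 1
        exact Finset.prod_congr rfl fun l hl => by
          rw [if_neg (Finset.ne_of_mem_erase hl)]
      rw [hsplit]
      have hA := weight_prod_le i0 s hs x
      rw [← hy] at hA
      have hnn : 0 ≤ F (y i0) ^ 2 * ∏ l ∈ Finset.univ.erase i0, G (y l) ^ 2 :=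
        mul_nonneg (sq_nonneg _) (Finset.prod_nonneg fun l _ => sq_nonneg _)
      calc (∏ j, (1 + 4 * π ^ 2 * ‖x j‖ ^ 2) ^ s j) * F (y i0) ^ 2 *
            ∏ l ∈ Finset.univ.erase i0, G (y l) ^ 2
          = (∏ j, (1 + 4 * π ^ 2 * ‖x j‖ ^ 2) ^ s j) *
            (F (y i0) ^ 2 * ∏ l ∈ Finset.univ.erase i0, G (y l) ^ 2) := by ring
        _ ≤ (K * ∏ l, (1 + 4 * π ^ 2 * ‖y l‖ ^ 2) ^ S) *
            (F (y i0) ^ 2 * ∏ l ∈ Finset.univ.erase i0, G (y l) ^ 2) :=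
            mul_le_mul_of_nonneg_right (by simpa [hK, hSdef, Nat.cast_add] using hA) hnn
        _ = K * ((∏ l, (1 + 4 * π ^ 2 * ‖y l‖ ^ 2) ^ S) *
            (F (y i0) ^ 2 * ∏ l ∈ Finset.univ.erase i0, G (y l) ^ 2)) := by ring
    calc ENNReal.ofReal ((∏ j, (1 + 4 * π ^ 2 * ‖x j‖ ^ 2) ^ s j) * F (∑ j, x j) ^ 2 *
          ∏ j ∈ Finset.univ.filter fun j : Fin (n+1) => (j : ℕ) ≠ 0, G (x i0 - x j) ^ 2)
        ≤ ENNReal.ofReal (K * ∏ l, ((1 + 4 * π ^ 2 * ‖y l‖ ^ 2) ^ S *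
            (if l = i0 then F (y l) else G (y l)) ^ 2)) := ENNReal.ofReal_le_ofReal hreal
      _ = ENNReal.ofReal K * ∏ l, ENNReal.ofReal ((1 + 4 * π ^ 2 * ‖y l‖ ^ 2) ^ S *
            (if l = i0 then F (y l) else G (y l)) ^ 2) := by
          rw [ENNReal.ofReal_mul hKpos.le, ENNReal.ofReal_prod_of_nonneg
            (fun l _ => mul_nonneg (Real.rpow_nonneg (hw _).le _) (sq_nonneg _))]
      _ = ENNReal.ofReal K * Φ y := by
          congr 1
          exact Finset.prod_congr rfl fun l _ => by
            by_cases hl : l = i0 <;> simp [hΦdef, hhfun, hhF, hhG, hl]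
  -- main computation
  calc (∫⁻ x : X, ENNReal.ofReal ((∏ j, (1 + 4 * π ^ 2 * ‖x j‖ ^ 2) ^ s j) *
          F (∑ j, x j) ^ 2 *
          ∏ j ∈ Finset.univ.filter fun j : Fin (n+1) => (j : ℕ) ≠ 0,
            G (x ⟨0, by omega⟩ - x j) ^ 2))
      ≤ ∫⁻ x : X, ENNReal.ofReal K * Φ (fwdL d (n+1) i0 x) := lintegral_mono claim
    _ = ENNReal.ofReal K * ∫⁻ x : X, Φ (fwdL d (n+1) i0 x) :=
        lintegral_const_mul _ (hΦmeas.comp hTmeas)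
    _ = ENNReal.ofReal K * ∫⁻ y, Φ y ∂(Measure.map (fwdL d (n+1) i0) volume) := by
        rw [lintegral_map hΦmeas hTmeas]
    _ = ENNReal.ofReal K * (ENNReal.ofReal D * ∫⁻ y, Φ y) := by
        rw [Measure.map_linearMap_addHaar_eq_smul_addHaar volume (det_fwdL_ne_zero d (n+1) i0),
          lintegral_smul_measure, smul_eq_mul]
    _ = ENNReal.ofReal (K * D) * ∫⁻ y, Φ y := by
        rw [ENNReal.ofReal_mul hKpos.le, mul_assoc]
    _ = ENNReal.ofReal (K * D) * ((∫⁻ z, hF z) *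
        ∏ j ∈ Finset.univ.filter fun j : Fin (n+1) => (j : ℕ) ≠ 0, ∫⁻ z, hG z) := by
        rw [hΦdef, lintegral_fin_prod n hfun hfunmeas,
          ← Finset.mul_prod_erase Finset.univ _ (Finset.mem_univ i0), hFil]
        have h1 : (∫⁻ z, hfun i0 z) = ∫⁻ z, hF z := by simp [hhfun]
        have h2 : ∀ l ∈ Finset.univ.erase i0, (∫⁻ z, hfun l z) = ∫⁻ z, hG z := fun l hl => by
          simp [hhfun, Finset.ne_of_mem_erase hl]
        rw [Finset.prod_congr rfl h2, h1]
    _ = ENNReal.ofReal (K * D) * (∫⁻ z, hF z) *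
        ∏ j ∈ Finset.univ.filter fun j : Fin (n+1) => (j : ℕ) ≠ 0, ∫⁻ z, hG z := by
        rw [mul_assoc]
end
end
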